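/- Let R = P/Q be a real rational function whose denominator Q has no real zeros and with deg P ≤ deg Q - 2. Then ∫_{-∞}^{∞} R(z) dz = ∫_{-∞}^{∞} [R(σ₊(w))σ₊'(w) + R(σ₋(w))σ₋'(w)] dw, where σ₊(w) = w + √(w²+1) and σ₋(w) = w - √(w²+1). -/

import Mathlib

open MeasureTheory

/-- The direct image of the 1-form `S(z)dz` under `π(z) = (z²-1)/(2z)`, computed with the
two sections `σ±(w) = w ± √(w²+1)`, whose derivatives are `1 ± w/√(w²+1)`. -/
noncomputable def pushforward (S : ℝ → ℝ) (w : ℝ) : ℝ :=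
  S (w + Real.sqrt (w ^ 2 + 1)) * (1 + w / Real.sqrt (w ^ 2 + 1)) +
  S (w - Real.sqrt (w ^ 2 + 1)) * (1 - w / Real.sqrt (w ^ 2 + 1))

namespace PushforwardAux

lemma sq_add_one_pos (w : ℝ) : (0:ℝ) < w ^ 2 + 1 := by positivity

lemma sqrt_pos (w : ℝ) : 0 < Real.sqrt (w ^ 2 + 1) :=
  Real.sqrt_pos.mpr (sq_add_one_pos w)

lemma abs_lt_sqrt (w : ℝ) : |w| < Real.sqrt (w ^ 2 + 1) := by
  rw [← Real.sqrt_sq_eq_abs]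
  exact Real.sqrt_lt_sqrt (sq_nonneg w) (by linarith)

lemma hasDerivAt_sqrt (w : ℝ) :
    HasDerivAt (fun w : ℝ => Real.sqrt (w ^ 2 + 1)) (w / Real.sqrt (w ^ 2 + 1)) w := by
  have h : HasDerivAt (fun w : ℝ => w ^ 2 + 1) (2 * w) w := by
    simpa using (hasDerivAt_pow 2 w).add_const 1
  have h2 := (Real.hasDerivAt_sqrt (ne_of_gt (sq_add_one_pos w))).comp w h
  refine h2.congr_deriv ?_
  have hs := (sqrt_pos w).ne'
  ring

lemma hasDerivAt_sigmaP (w : ℝ) :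
    HasDerivAt (fun w : ℝ => w + Real.sqrt (w ^ 2 + 1))
      (1 + w / Real.sqrt (w ^ 2 + 1)) w :=
  (hasDerivAt_id w).add (hasDerivAt_sqrt w)

lemma hasDerivAt_sigmaM (w : ℝ) :
    HasDerivAt (fun w : ℝ => w - Real.sqrt (w ^ 2 + 1))
      (1 - w / Real.sqrt (w ^ 2 + 1)) w :=
  (hasDerivAt_id w).sub (hasDerivAt_sqrt w)

lemma derivP_pos (w : ℝ) : 0 < 1 + w / Real.sqrt (w ^ 2 + 1) := by
  have hs := sqrt_pos w
  have h := abs_lt_sqrt w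
  have h1 : -Real.sqrt (w ^ 2 + 1) < w := (abs_lt.mp h).1
  have : 1 + w / Real.sqrt (w ^ 2 + 1) = (Real.sqrt (w ^ 2 + 1) + w) / Real.sqrt (w ^ 2 + 1) := by
    field_simp
  rw [this]
  apply div_pos (by linarith) hs

lemma derivM_pos (w : ℝ) : 0 < 1 - w / Real.sqrt (w ^ 2 + 1) := by
  have hs := sqrt_pos w
  have h := abs_lt_sqrt w
  have h1 : w < Real.sqrt (w ^ 2 + 1) := (abs_lt.mp h).2
  have : 1 - w / Real.sqrt (w ^ 2 + 1) = (Real.sqrt (w ^ 2 + 1) - w) / Real.sqrt (w ^ 2 + 1) := by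
    field_simp
  rw [this]
  apply div_pos (by linarith) hs

lemma strictMonoP : StrictMono (fun w : ℝ => w + Real.sqrt (w ^ 2 + 1)) :=
  strictMono_of_deriv_pos fun w => by
    rw [(hasDerivAt_sigmaP w).deriv]; exact derivP_pos w

lemma strictMonoM : StrictMono (fun w : ℝ => w - Real.sqrt (w ^ 2 + 1)) :=
  strictMono_of_deriv_pos fun w => by
    rw [(hasDerivAt_sigmaM w).deriv]; exact derivM_pos w

lemma rangeP : Set.range (fun w : ℝ => w + Real.sqrt (w ^ 2 + 1)) = Set.Ioi 0 := by
  ext z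
  simp only [Set.mem_range, Set.mem_Ioi]
  constructor
  · rintro ⟨w, rfl⟩
    have h1 : -Real.sqrt (w ^ 2 + 1) < w := (abs_lt.mp (abs_lt_sqrt w)).1
    linarith
  · intro hz
    refine ⟨(z ^ 2 - 1) / (2 * z), ?_⟩
    have hz' : z ≠ 0 := ne_of_gt hz
    have hsq : ((z ^ 2 - 1) / (2 * z)) ^ 2 + 1 = ((z ^ 2 + 1) / (2 * z)) ^ 2 := by
      field_simp; ring
    rw [hsq, Real.sqrt_sq (by positivity)]
    field_simp
    ring

lemma rangeM : Set.range (fun w : ℝ => w - Real.sqrt (w ^ 2 + 1)) = Set.Iio 0 := by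
  ext z
  simp only [Set.mem_range, Set.mem_Iio]
  constructor
  · rintro ⟨w, rfl⟩
    have h1 : w < Real.sqrt (w ^ 2 + 1) := (abs_lt.mp (abs_lt_sqrt w)).2
    linarith
  · intro hz
    refine ⟨(z ^ 2 - 1) / (2 * z), ?_⟩
    have hz' : z ≠ 0 := ne_of_lt hz
    have hsq : ((z ^ 2 - 1) / (2 * z)) ^ 2 + 1 = (-(z ^ 2 + 1) / (2 * z)) ^ 2 := by
      field_simp; ring
    have hpos : 0 ≤ -(z ^ 2 + 1) / (2 * z) := by
      apply div_nonneg_iff.mpr (Or.inr ⟨by nlinarith, by nlinarith⟩)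
    rw [hsq, Real.sqrt_sq hpos]
    field_simp
    ring

/-- Change of variables on `(0, ∞)` via `σ₊`. -/
lemma integral_Ioi (g : ℝ → ℝ) :
    ∫ z in Set.Ioi (0:ℝ), g z
      = ∫ w : ℝ, g (w + Real.sqrt (w ^ 2 + 1)) * (1 + w / Real.sqrt (w ^ 2 + 1)) := by
  have h := integral_image_eq_integral_abs_deriv_smul (s := (Set.univ : Set ℝ))
      MeasurableSet.univ
      (fun x _ => (hasDerivAt_sigmaP x).hasDerivWithinAt)
      (strictMonoP.injective.injOn) g
  rw [Set.image_univ, rangeP] at h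
  rw [h, Measure.restrict_univ]
  congr 1
  ext w
  rw [abs_of_pos (derivP_pos w), smul_eq_mul, mul_comm]

/-- Change of variables on `(-∞, 0)` via `σ₋`. -/
lemma integral_Iio (g : ℝ → ℝ) :
    ∫ z in Set.Iio (0:ℝ), g z
      = ∫ w : ℝ, g (w - Real.sqrt (w ^ 2 + 1)) * (1 - w / Real.sqrt (w ^ 2 + 1)) := by
  have h := integral_image_eq_integral_abs_deriv_smul (s := (Set.univ : Set ℝ))
      MeasurableSet.univ
      (fun x _ => (hasDerivAt_sigmaM x).hasDerivWithinAt)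
      (strictMonoM.injective.injOn) g
  rw [Set.image_univ, rangeM] at h
  rw [h, Measure.restrict_univ]
  congr 1
  ext w
  rw [abs_of_pos (derivM_pos w), smul_eq_mul, mul_comm]

lemma integrableP {g : ℝ → ℝ} (hg : IntegrableOn g (Set.Ioi (0:ℝ))) :
    Integrable (fun w : ℝ => g (w + Real.sqrt (w ^ 2 + 1)) * (1 + w / Real.sqrt (w ^ 2 + 1))) := by
  have h := (integrableOn_image_iff_integrableOn_abs_deriv_smul (s := (Set.univ : Set ℝ))
      MeasurableSet.univ
      (fun x _ => (hasDerivAt_sigmaP x).hasDerivWithinAt)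
      (strictMonoP.injective.injOn) g)
  rw [Set.image_univ, rangeP] at h
  have h2 := h.mp hg
  rw [IntegrableOn, Measure.restrict_univ] at h2
  convert h2 using 2 with w
  rw [abs_of_pos (derivP_pos w), smul_eq_mul, mul_comm]

lemma integrableM {g : ℝ → ℝ} (hg : IntegrableOn g (Set.Iio (0:ℝ))) :
    Integrable (fun w : ℝ => g (w - Real.sqrt (w ^ 2 + 1)) * (1 - w / Real.sqrt (w ^ 2 + 1))) := by
  have h := (integrableOn_image_iff_integrableOn_abs_deriv_smul (s := (Set.univ : Set ℝ))
      MeasurableSet.univ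
      (fun x _ => (hasDerivAt_sigmaM x).hasDerivWithinAt)
      (strictMonoM.injective.injOn) g)
  rw [Set.image_univ, rangeM] at h
  have h2 := h.mp hg
  rw [IntegrableOn, Measure.restrict_univ] at h2
  convert h2 using 2 with w
  rw [abs_of_pos (derivM_pos w), smul_eq_mul, mul_comm]

lemma degree_comp_negX (p : Polynomial ℝ) :
    (p.comp (-Polynomial.X)).degree = p.degree := by
  by_cases hp : p = 0
  · simp [hp]
  have hlc : (p.comp (-Polynomial.X)).leadingCoeff ≠ 0 := by
    rw [Polynomial.leadingCoeff_comp (by simp)]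
    simp [Polynomial.leadingCoeff_ne_zero.mpr hp, pow_ne_zero]
  have hne : p.comp (-Polynomial.X) ≠ 0 := fun h => hlc (by simp [h])
  rw [Polynomial.degree_eq_natDegree hne, Polynomial.degree_eq_natDegree hp,
    Polynomial.natDegree_comp]
  simp

/-- Integrability of the rational function. -/
lemma integrable_ratfun (P Q : Polynomial ℝ)
    (hQ : ∀ x : ℝ, Q.eval x ≠ 0) (hdeg : P.degree + 2 ≤ Q.degree) :
    Integrable (fun z : ℝ => P.eval z / Q.eval z) := by
  have hcont : Continuous (fun z : ℝ => P.eval z / Q.eval z) :=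
    P.continuous_aeval.div Q.continuous_aeval hQ
  by_cases hP : P = 0
  · simp [hP]
  -- the auxiliary polynomial `P * (1 + X²)` has degree ≤ deg Q
  set P' : Polynomial ℝ := P * (Polynomial.X ^ 2 + Polynomial.C 1) with hP'
  have hdeg2 : (Polynomial.X ^ 2 + Polynomial.C (1:ℝ)).degree = 2 :=
    Polynomial.degree_X_pow_add_C (by norm_num) 1
  have hP'deg : P'.degree ≤ Q.degree := by
    rw [hP', Polynomial.degree_mul, hdeg2]
    exact hdeg
  -- big-O bound at atTop and atBot
  have key : ∀ l : Filter ℝ,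
      (fun x => P'.eval x) =O[l] (fun x => Q.eval x) →
      (fun z : ℝ => P.eval z / Q.eval z) =O[l] (fun x : ℝ => (1 + x ^ 2)⁻¹) := by
    intro l hO
    rw [Asymptotics.isBigO_iff] at hO ⊢
    obtain ⟨C, hC⟩ := hO
    refine ⟨C, hC.mono fun x hx => ?_⟩
    have h1 : (0:ℝ) < 1 + x ^ 2 := by positivity
    have hQx := hQ x
    have hevP' : P'.eval x = P.eval x * (x ^ 2 + 1) := by simp [hP']
    rw [hevP'] at hx
    simp only [Real.norm_eq_abs] at hx ⊢
    rw [abs_div, abs_inv, abs_of_pos h1]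
    rw [div_le_iff₀ (abs_pos.mpr hQx)]
    rw [abs_mul, abs_of_pos (by positivity : (0:ℝ) < x ^ 2 + 1)] at hx
    have h2 : |P.eval x| ≤ C * |Q.eval x| / (x ^ 2 + 1) := by
      rw [le_div_iff₀ (by positivity)]
      linarith
    calc |P.eval x| ≤ C * |Q.eval x| / (x ^ 2 + 1) := h2
      _ = C * (1 + x ^ 2)⁻¹ * |Q.eval x| := by rw [div_eq_inv_mul]; ring_nf
  have hTop : (fun x => P'.eval x) =O[Filter.atTop] (fun x => Q.eval x) :=
    Polynomial.isBigO_of_degree_le P' Q hP'deg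
  have hBot : (fun x => P'.eval x) =O[Filter.atBot] (fun x => Q.eval x) := by
    have h := Polynomial.isBigO_of_degree_le (P'.comp (-Polynomial.X))
        (Q.comp (-Polynomial.X))
        (by rw [degree_comp_negX, degree_comp_negX]; exact hP'deg)
    have h2 := h.comp_tendsto (Filter.tendsto_neg_atBot_atTop :
        Filter.Tendsto (Neg.neg : ℝ → ℝ) Filter.atBot Filter.atTop)
    have e1 : ((fun x => (P'.comp (-Polynomial.X)).eval x) ∘ (Neg.neg : ℝ → ℝ))
        = fun x => P'.eval x := by
      ext x; simp [Polynomial.eval_comp]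
    have e2 : ((fun x => (Q.comp (-Polynomial.X)).eval x) ∘ (Neg.neg : ℝ → ℝ))
        = fun x => Q.eval x := by
      ext x; simp [Polynomial.eval_comp]
    rwa [e1, e2] at h2
  have hO : (fun z : ℝ => P.eval z / Q.eval z) =O[Filter.cocompact ℝ]
      (fun x : ℝ => (1 + x ^ 2)⁻¹) := by
    rw [cocompact_eq_atBot_atTop, Asymptotics.isBigO_sup]
    exact ⟨key _ hBot, key _ hTop⟩
  exact (hcont.locallyIntegrable).integrable_of_isBigO_cocompact hO
    (integrable_inv_one_add_sq.integrableAtFilter _)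

end PushforwardAux

/-- For a real rational function `R = P/Q` with no real poles and `deg P ≤ deg Q - 2`,
the integral over `ℝ` of `R` equals the integral over `ℝ` of its direct image under
`π(z) = (z²-1)/(2z)`. -/
theorem integral_eq_integral_pushforward (P Q : Polynomial ℝ)
    (hQ : ∀ x : ℝ, Q.eval x ≠ 0) (hdeg : P.degree + 2 ≤ Q.degree) :
    ∫ z : ℝ, P.eval z / Q.eval z
      = ∫ w : ℝ, pushforward (fun z => P.eval z / Q.eval z) w := by
  set g : ℝ → ℝ := fun z => P.eval z / Q.eval z with hg
  have hint : Integrable g := PushforwardAux.integrable_ratfun P Q hQ hdeg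
  have hsplit : ∫ z : ℝ, g z = (∫ z in Set.Iic (0:ℝ), g z) + ∫ z in Set.Ioi (0:ℝ), g z :=
    (intervalIntegral.integral_Iic_add_Ioi hint.integrableOn hint.integrableOn).symm
  rw [hsplit, integral_Iic_eq_integral_Iio, PushforwardAux.integral_Iio g,
    PushforwardAux.integral_Ioi g]
  simp only [pushforward]
  rw [MeasureTheory.integral_add (PushforwardAux.integrableP hint.integrableOn)
    (PushforwardAux.integrableM hint.integrableOn)]
  ring
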